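/- Fix k ≥ 3. Let t be any formal term built from a single k-ary operation symbol w and variables, say with m variable slots, and let x₁,…,xₘ and y₁,…,yₘ be variables with xᵢ ≠ yᵢ for every i. Then the identity t(x₁,…,xₘ) ≈ t(y₁,…,yₘ) is not a consequence of the k-wnu identities; that is, there is an algebra with one k-ary operation satisfying the k-wnu identities and an assignment of variables under which the two sides evaluate differently. -/

import Mathlib

/-- Formal terms built from variables in `V` and a single `k`-ary operation symbol `w`. -/
inductive TermK (k : ℕ) (V : Type) : Type
  | var : V → TermK k V
  | w : (Fin k → TermK k V) → TermK k V

/-- Evaluation of a term in an algebra `(B, f)` under a variable assignment `σ`. -/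
def TermK.eval {k : ℕ} {V B : Type} (f : (Fin k → B) → B) (σ : V → B) : TermK k V → B
  | .var v => σ v
  | .w ts => f (fun i => (ts i).eval f σ)

/-- Renaming/substitution of variables in a term. -/
def TermK.rename {k : ℕ} {V V' : Type} (ρ : V → V') : TermK k V → TermK k V'
  | .var v => .var (ρ v)
  | .w ts => .w (fun i => (ts i).rename ρ)

/-- A `k`-ary operation `f` satisfies the `k`-wnu identities: `f(x,…,x) = x` and
the value of `f` on a tuple with a single `y` among `x`'s does not depend on the
position of the `y`. -/
def IsKWNU {k : ℕ} {B : Type} (f : (Fin k → B) → B) : Prop :=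
  (∀ x, f (fun _ => x) = x) ∧
  ∀ (x y : B) (i j : Fin k),
    f (Function.update (fun _ => x) i y) = f (Function.update (fun _ => x) j y)

/-- Two terms are equal modulo the equational theory generated by the `k`-wnu identities,
i.e. they evaluate equally in every algebra satisfying the `k`-wnu identities. -/
def EqWnuK {k : ℕ} {V : Type} (t s : TermK k V) : Prop :=
  ∀ (B : Type) (f : (Fin k → B) → B) (σ : V → B), IsKWNU f → t.eval f σ = s.eval f σ

/-- The set `Aₖ` of `k`-wnu normal forms (over the countably infinite variable set `ℕ`):
every variable is a normal form, and `w(a₁,…,aₖ)` is a normal form whenever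
`a₁,…,aₖ` are normal forms and there are two distinct indices `i, j` with
`a₁ ≠ aᵢ` and `a₁ ≠ aⱼ`. -/
inductive IsNFK {k : ℕ} [NeZero k] : TermK k ℕ → Prop
  | var (n : ℕ) : IsNFK (.var n)
  | w (ts : Fin k → TermK k ℕ) : (∀ i, IsNFK (ts i)) →
      (∃ i j : Fin k, i ≠ j ∧ ts 0 ≠ ts i ∧ ts 0 ≠ ts j) → IsNFK (.w ts)

open Classical in
/-- The normal-form operation `w^A` on `k`-ary terms:
`w^A(a,…,a) = a`; if some coordinate is `c` and all the others equal `d ≠ c` then the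
value is `w(c,d,…,d)`; otherwise `w^A(a₁,…,aₖ) = w(a₁,…,aₖ)`. -/
noncomputable def wAK {k : ℕ} [NeZero k] (ts : Fin k → TermK k ℕ) : TermK k ℕ :=
  if ∀ i, ts i = ts 0 then ts 0
  else if h : ∃ icd : Fin k × TermK k ℕ × TermK k ℕ,
      icd.2.1 ≠ icd.2.2 ∧ ∀ j, ts j = if j = icd.1 then icd.2.1 else icd.2.2 then
    TermK.w (fun l => if l = 0 then h.choose.2.1 else h.choose.2.2)
  else TermK.w ts

/-- The subterm relation `⪯` on `k`-wnu normal forms: the reflexive transitive closure of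
`{(a,b) : a,b ∈ Aₖ, ∃ c₁,…,cₖ ∈ Aₖ, b = w(c₁,…,cₖ) ∧ a ∈ {c₁,…,cₖ}}`. -/
def SubK {k : ℕ} [NeZero k] (a b : TermK k ℕ) : Prop :=
  Relation.ReflTransGen
    (fun s t => IsNFK s ∧ IsNFK t ∧ ∃ cs : Fin k → TermK k ℕ,
      (∀ i, IsNFK (cs i)) ∧ t = .w cs ∧ ∃ i, s = cs i) a b

section Aux

variable {k : ℕ}

/-- For `k ≥ 3`, any index of `Fin k` misses two distinct indices. -/
lemma exists_two_ne (hk : 3 ≤ k) (i : Fin k) :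
    ∃ j1 j2 : Fin k, j1 ≠ j2 ∧ j1 ≠ i ∧ j2 ≠ i := by
  have h0 : (0 : ℕ) < k := by omega
  have h1 : (1 : ℕ) < k := by omega
  have h2 : (2 : ℕ) < k := by omega
  by_cases hi0 : i = ⟨0, h0⟩
  · exact ⟨⟨1, h1⟩, ⟨2, h2⟩, by simp [Fin.ext_iff], by simp [hi0, Fin.ext_iff],
      by simp [hi0, Fin.ext_iff]⟩
  by_cases hi1 : i = ⟨1, h1⟩
  · exact ⟨⟨0, h0⟩, ⟨2, h2⟩, by simp [Fin.ext_iff], by simp [hi1, Fin.ext_iff],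
      by simp [hi1, Fin.ext_iff]⟩
  · exact ⟨⟨0, h0⟩, ⟨1, h1⟩, by simp [Fin.ext_iff],
      fun h => hi0 h.symm, fun h => hi1 h.symm⟩

lemma wAK_of_const [NeZero k] {ts : Fin k → TermK k ℕ} (h : ∀ i, ts i = ts 0) :
    wAK ts = ts 0 := by
  rw [wAK, if_pos h]

lemma wAK_of_else [NeZero k] {ts : Fin k → TermK k ℕ} (h1 : ¬ ∀ i, ts i = ts 0)
    (h2 : ¬ ∃ icd : Fin k × TermK k ℕ × TermK k ℕ,
      icd.2.1 ≠ icd.2.2 ∧ ∀ j, ts j = if j = icd.1 then icd.2.1 else icd.2.2) :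
    wAK ts = TermK.w ts := by
  rw [wAK, if_neg h1, dif_neg h2]

lemma wAK_of_pattern [NeZero k] (hk : 3 ≤ k) {ts : Fin k → TermK k ℕ}
    {i0 : Fin k} {C D : TermK k ℕ} (hCD : C ≠ D)
    (hts : ∀ j, ts j = if j = i0 then C else D) :
    wAK ts = TermK.w (fun l => if l = 0 then C else D) := by
  have h2 : ∃ icd : Fin k × TermK k ℕ × TermK k ℕ,
      icd.2.1 ≠ icd.2.2 ∧ ∀ j, ts j = if j = icd.1 then icd.2.1 else icd.2.2 :=
    ⟨⟨i0, C, D⟩, hCD, hts⟩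
  have h1 : ¬ ∀ i, ts i = ts 0 := by
    intro hall
    obtain ⟨j1, j2, hj12, hj1, hj2⟩ := exists_two_ne hk i0
    have e1 : ts i0 = C := by rw [hts i0, if_pos rfl]
    have e2 : ts j1 = D := by rw [hts j1, if_neg hj1]
    exact hCD (by rw [← e1, hall i0, ← hall j1, e2])
  rw [wAK, if_neg h1, dif_pos h2]
  obtain ⟨hCD', hts'⟩ := h2.choose_spec
  set i1 := h2.choose.1
  set C' := h2.choose.2.1
  set D' := h2.choose.2.2
  -- find j ≠ i1 and j ≠ i0
  obtain ⟨j1, j2, hj12, hj1, hj2⟩ := exists_two_ne hk i1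
  obtain ⟨j, hji1, hji0⟩ : ∃ j : Fin k, j ≠ i1 ∧ j ≠ i0 := by
    by_cases h : j1 = i0
    · exact ⟨j2, hj2, fun hc => hj12 (by rw [h, hc])⟩
    · exact ⟨j1, hj1, h⟩
  have hD : D' = D := by
    have e1 : ts j = D' := by rw [hts' j, if_neg hji1]
    have e2 : ts j = D := by rw [hts j, if_neg hji0]
    rw [← e1, e2]
  have hC : C' = C := by
    have e1 : ts i1 = C' := by rw [hts' i1, if_pos rfl]
    by_cases h : i1 = i0
    · rw [← e1, hts i1, if_pos h]
    · exfalso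
      have e2 : ts i1 = D := by rw [hts i1, if_neg h]
      exact hCD' (by rw [← e1, e2, hD])
  rw [hC, hD]

/-- `wAK` is a `k`-wnu operation. -/
lemma isKWNU_wAK [NeZero k] (hk : 3 ≤ k) : IsKWNU (wAK (k := k)) := by
  constructor
  · intro x
    exact wAK_of_const (fun _ => rfl)
  · intro x y i j
    by_cases hxy : x = y
    · subst hxy
      rw [show Function.update (fun _ => x) i x = fun _ => x from
          Function.update_eq_self i (fun _ => x),
        show Function.update (fun _ => x) j x = fun _ => x from
          Function.update_eq_self j (fun _ => x)]
    · have hyx : y ≠ x := fun h => hxy h.symm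
      rw [wAK_of_pattern hk hyx (fun l => Function.update_apply (fun _ => x) i y l),
        wAK_of_pattern hk hyx (fun l => Function.update_apply (fun _ => x) j y l)]

/-- `wAK` preserves normal forms. -/
lemma isNFK_wAK [NeZero k] (hk : 3 ≤ k) (ts : Fin k → TermK k ℕ)
    (h : ∀ i, IsNFK (ts i)) : IsNFK (wAK ts) := by
  by_cases h1 : ∀ i, ts i = ts 0
  · rw [wAK_of_const h1]; exact h 0
  by_cases h2 : ∃ icd : Fin k × TermK k ℕ × TermK k ℕ,
      icd.2.1 ≠ icd.2.2 ∧ ∀ j, ts j = if j = icd.1 then icd.2.1 else icd.2.2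
  · obtain ⟨⟨i0, C, D⟩, hCD, hts⟩ := h2
    rw [wAK_of_pattern hk hCD hts]
    obtain ⟨j1, j2, hj12, hj1, hj2⟩ := exists_two_ne hk i0
    have hCnf : IsNFK C := by have := h i0; rwa [hts i0, if_pos rfl] at this
    have hDnf : IsNFK D := by have := h j1; rwa [hts j1, if_neg hj1] at this
    have h1' : (1 : ℕ) < k := by omega
    have h2' : (2 : ℕ) < k := by omega
    have hne1 : (⟨1, h1'⟩ : Fin k) ≠ 0 := by simp [Fin.ext_iff]
    have hne2 : (⟨2, h2'⟩ : Fin k) ≠ 0 := by simp [Fin.ext_iff]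
    refine IsNFK.w _ (fun l => ?_) ⟨⟨1, h1'⟩, ⟨2, h2'⟩, by simp [Fin.ext_iff], ?_, ?_⟩
    · by_cases hl : l = 0
      · rw [if_pos hl]; exact hCnf
      · rw [if_neg hl]; exact hDnf
    · rw [if_pos rfl, if_neg hne1]; exact hCD
    · rw [if_pos rfl, if_neg hne2]; exact hCD
  · rw [wAK_of_else h1 h2]
    push_neg at h1
    obtain ⟨i, hi⟩ := h1
    have hi0 : i ≠ 0 := fun h => hi (by rw [h])
    obtain ⟨i', hii', hi'⟩ : ∃ i' : Fin k, i' ≠ i ∧ ts i' ≠ ts 0 := by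
      by_contra hcon
      push_neg at hcon
      refine h2 ⟨⟨i, ts i, ts 0⟩, hi, fun j => ?_⟩
      by_cases hj : j = i
      · rw [if_pos hj, hj]
      · rw [if_neg hj]; exact hcon j hj
    exact IsNFK.w _ h ⟨i, i', fun h => hii' h.symm, fun h => hi h.symm,
      fun h => hi' h.symm⟩

/-- An argument of a normal form `w(cs)` is a `SubK`-subterm of it. -/
lemma subk_arg [NeZero k] {cs : Fin k → TermK k ℕ} (hcs : ∀ i, IsNFK (cs i))
    (hw : IsNFK (TermK.w cs)) (i : Fin k) : SubK (cs i) (TermK.w cs) :=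
  Relation.ReflTransGen.single ⟨hcs i, hw, cs, hcs, rfl, i, rfl⟩

/-- Each argument is a `SubK`-subterm of `wAK` of the tuple. -/
lemma le_wAK [NeZero k] (hk : 3 ≤ k) (ts : Fin k → TermK k ℕ)
    (h : ∀ i, IsNFK (ts i)) (i : Fin k) : SubK (ts i) (wAK ts) := by
  have hnf := isNFK_wAK hk ts h
  by_cases h1 : ∀ i, ts i = ts 0
  · rw [wAK_of_const h1, ← h1 i]
    exact Relation.ReflTransGen.refl
  by_cases h2 : ∃ icd : Fin k × TermK k ℕ × TermK k ℕ,
      icd.2.1 ≠ icd.2.2 ∧ ∀ j, ts j = if j = icd.1 then icd.2.1 else icd.2.2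
  · obtain ⟨⟨i0, C, D⟩, hCD, hts⟩ := h2
    have hwe := wAK_of_pattern hk hCD hts
    rw [hwe] at hnf ⊢
    set g : Fin k → TermK k ℕ := fun l => if l = 0 then C else D with hg
    obtain ⟨j1, j2, hj12, hj1, hj2⟩ := exists_two_ne hk i0
    have hgnf : ∀ l, IsNFK (g l) := by
      intro l
      by_cases hl : l = 0
      · simp only [hg, if_pos hl]
        have := h i0; rwa [hts i0, if_pos rfl] at this
      · simp only [hg, if_neg hl]
        have := h j1; rwa [hts j1, if_neg hj1] at this
    have h1' : (1 : ℕ) < k := by omega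
    have hne1 : (⟨1, h1'⟩ : Fin k) ≠ 0 := by simp [Fin.ext_iff]
    by_cases hi : i = i0
    · have : ts i = C := by rw [hts i, if_pos hi]
      rw [this]
      have := subk_arg hgnf hnf 0
      simpa only [hg, if_pos rfl] using this
    · have : ts i = D := by rw [hts i, if_neg hi]
      rw [this]
      have := subk_arg hgnf hnf ⟨1, h1'⟩
      simpa only [hg, if_neg hne1] using this
  · rw [wAK_of_else h1 h2] at hnf ⊢
    exact subk_arg h hnf i

/-- Decomposition of the reflexive-transitive subterm relation at the top. -/
lemma subk_cases [NeZero k] {a b : TermK k ℕ} (h : SubK a b) :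
    a = b ∨ ∃ cs : Fin k → TermK k ℕ,
      (∀ i, IsNFK (cs i)) ∧ b = TermK.w cs ∧ ∃ i, SubK a (cs i) := by
  rcases Relation.ReflTransGen.cases_tail h with h | ⟨c, hac, hcb⟩
  · exact Or.inl h.symm
  · obtain ⟨_, _, cs, hcs, hb, i, hci⟩ := hcb
    exact Or.inr ⟨cs, hcs, hb, i, hci ▸ hac⟩

lemma subk_var [NeZero k] {a : TermK k ℕ} {n : ℕ} (h : SubK a (.var n)) :
    a = .var n := by
  rcases subk_cases h with h | ⟨cs, _, hb, _⟩
  · exact h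
  · exact absurd hb (fun hc => by cases hc)

/-- The key step: if all coordinates are pairwise `SubK`-incomparable, so are the
values of `wAK`. -/
lemma step_wAK [NeZero k] (hk : 3 ≤ k) (a b : Fin k → TermK k ℕ)
    (ha : ∀ i, IsNFK (a i)) (hb : ∀ i, IsNFK (b i))
    (h1 : ∀ i, ¬ SubK (a i) (b i)) (h2 : ∀ i, ¬ SubK (b i) (a i)) :
    ¬ SubK (wAK a) (wAK b) := by
  intro hAB
  by_cases hb1 : ∀ i, b i = b 0
  · rw [wAK_of_const hb1] at hAB
    exact h1 0 ((le_wAK hk a ha 0).trans hAB)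
  by_cases hb2 : ∃ icd : Fin k × TermK k ℕ × TermK k ℕ,
      icd.2.1 ≠ icd.2.2 ∧ ∀ j, b j = if j = icd.1 then icd.2.1 else icd.2.2
  · -- b is an update pattern: wAK b = w(C, D, …, D)
    obtain ⟨⟨i0, C, D⟩, hCD, hbj⟩ := hb2
    have hBnf : IsNFK (wAK b) := isNFK_wAK hk b hb
    have hwe := wAK_of_pattern hk hCD hbj
    rw [hwe] at hAB hBnf
    set g : Fin k → TermK k ℕ := fun l => if l = 0 then C else D with hg
    obtain ⟨j1, j2, hj12, hj1, hj2⟩ := exists_two_ne hk i0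
    have hbj1 : b j1 = D := by rw [hbj j1, if_neg hj1]
    have hbi0 : b i0 = C := by rw [hbj i0, if_pos rfl]
    have hgnf : ∀ l, IsNFK (g l) := by
      intro l
      by_cases hl : l = 0
      · simp only [hg, if_pos hl]; exact hbi0 ▸ hb i0
      · simp only [hg, if_neg hl]; exact hbj1 ▸ hb j1
    have h1' : (1 : ℕ) < k := by omega
    have hne1 : (⟨1, h1'⟩ : Fin k) ≠ 0 := by simp [Fin.ext_iff]
    rcases subk_cases hAB with hEq | ⟨cs, hcs, hwcs, i, hsub⟩
    · -- wAK a = w g : case on the branch taken by wAK a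
      by_cases ha1 : ∀ i, a i = a 0
      · -- a constant: a 0 = w g, and D = b j1 ⊑ w g = a j1
        have hA : a 0 = TermK.w g := by rw [← wAK_of_const ha1, hEq]
        refine h2 j1 ?_
        rw [hbj1, ha1 j1, hA]
        have := subk_arg hgnf hBnf ⟨1, h1'⟩
        simpa only [hg, if_neg hne1] using this
      by_cases ha2 : ∃ icd : Fin k × TermK k ℕ × TermK k ℕ,
          icd.2.1 ≠ icd.2.2 ∧ ∀ j, a j = if j = icd.1 then icd.2.1 else icd.2.2
      · -- a is an update pattern too
        obtain ⟨⟨i1, C', D'⟩, hC'D', haj⟩ := ha2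
        have hwe' := wAK_of_pattern hk hC'D' haj
        rw [hwe'] at hEq
        have hfun : (fun l : Fin k => if l = 0 then C' else D') = g := by
          injection hEq
        have hD' : D' = D := by
          have := congrFun hfun ⟨1, h1'⟩
          simpa only [hg, if_neg hne1] using this
        obtain ⟨l1, l2, hl12, hl1, hl2⟩ := exists_two_ne hk i1
        obtain ⟨l, hli1, hli0⟩ : ∃ l : Fin k, l ≠ i1 ∧ l ≠ i0 := by
          by_cases h : l1 = i0
          · exact ⟨l2, hl2, fun hc => hl12 (by rw [h, hc])⟩
          · exact ⟨l1, hl1, h⟩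
        refine h1 l ?_
        have e1 : a l = D' := by rw [haj l, if_neg hli1]
        have e2 : b l = D := by rw [hbj l, if_neg hli0]
        rw [e1, e2, hD']
        exact Relation.ReflTransGen.refl
      · -- a in the else branch: w a = w g, so a itself is an update pattern, contra
        rw [wAK_of_else ha1 ha2] at hEq
        have hfun : a = g := by injection hEq
        exact ha2 ⟨((0 : Fin k), C, D), hCD, fun j => by rw [hfun]⟩
    · -- strict case: wAK a ⊑ some argument of w g
      have hfun : g = cs := by injection hwcs
      by_cases hi : i = 0
      · refine h1 i0 ?_
        have hcsi : cs i = C := by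
          rw [← hfun]; simp only [hg]; rw [if_pos hi]
        rw [hbi0, ← hcsi]
        exact (le_wAK hk a ha i0).trans hsub
      · refine h1 j1 ?_
        have hcsi : cs i = D := by
          rw [← hfun]; simp only [hg]; rw [if_neg hi]
        rw [hbj1, ← hcsi]
        exact (le_wAK hk a ha j1).trans hsub
  · -- b in the else branch: wAK b = w b
    have hBnf : IsNFK (wAK b) := isNFK_wAK hk b hb
    have hwe := wAK_of_else hb1 hb2
    rw [hwe] at hAB hBnf
    rcases subk_cases hAB with hEq | ⟨cs, hcs, hwcs, i, hsub⟩
    · by_cases ha1 : ∀ i, a i = a 0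
      · have hA : a 0 = TermK.w b := by rw [← wAK_of_const ha1, hEq]
        refine h2 0 ?_
        rw [hA]
        exact subk_arg hb hBnf 0
      by_cases ha2 : ∃ icd : Fin k × TermK k ℕ × TermK k ℕ,
          icd.2.1 ≠ icd.2.2 ∧ ∀ j, a j = if j = icd.1 then icd.2.1 else icd.2.2
      · obtain ⟨⟨i1, C', D'⟩, hC'D', haj⟩ := ha2
        have hwe' := wAK_of_pattern hk hC'D' haj
        rw [hwe'] at hEq
        have hfun : (fun l : Fin k => if l = 0 then C' else D') = b := by
          injection hEq
        exact hb2 ⟨((0 : Fin k), C', D'), hC'D', fun j => by rw [← hfun]⟩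
      · rw [wAK_of_else ha1 ha2] at hEq
        have hfun : a = b := by injection hEq
        exact h1 0 (hfun ▸ Relation.ReflTransGen.refl)
    · have hfun : b = cs := by injection hwcs
      refine h1 i ((le_wAK hk a ha i).trans ?_)
      rw [hfun]
      exact hsub

/-- Evaluation in the normal-form algebra gives normal forms. -/
lemma eval_nf [NeZero k] (hk : 3 ≤ k) {V : Type} (t : TermK k V)
    (σ : V → TermK k ℕ) (hσ : ∀ v, IsNFK (σ v)) : IsNFK (t.eval wAK σ) := by
  induction t with
  | var v => exact hσ v
  | w ts ih =>
    simp only [TermK.eval]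
    exact isNFK_wAK hk _ (fun i => ih i)

/-- Main induction: pointwise incomparable assignments give incomparable values. -/
lemma main_incomp [NeZero k] (hk : 3 ≤ k) {V : Type} (t : TermK k V)
    (v u : V → TermK k ℕ) (hv : ∀ i, IsNFK (v i)) (hu : ∀ i, IsNFK (u i))
    (h1 : ∀ i, ¬ SubK (v i) (u i)) (h2 : ∀ i, ¬ SubK (u i) (v i)) :
    ¬ SubK (t.eval wAK v) (t.eval wAK u) ∧
      ¬ SubK (t.eval wAK u) (t.eval wAK v) := by
  induction t with
  | var n => exact ⟨h1 n, h2 n⟩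
  | w ts ih =>
    simp only [TermK.eval]
    refine ⟨step_wAK hk _ _ (fun i => eval_nf hk _ v hv) (fun i => eval_nf hk _ u hu)
        (fun i => (ih i).1) (fun i => (ih i).2), ?_⟩
    exact step_wAK hk _ _ (fun i => eval_nf hk _ u hu) (fun i => eval_nf hk _ v hv)
      (fun i => (ih i).2) (fun i => (ih i).1)

lemma eval_rename {V V' B : Type} (f : (Fin k → B) → B) (σ : V' → B)
    (ρ : V → V') (t : TermK k V) :
    (t.rename ρ).eval f σ = t.eval f (fun v => σ (ρ v)) := by
  induction t with
  | var v => rfl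
  | w ts ih => simp only [TermK.rename, TermK.eval, ih]

end Aux

/-- Fix `k ≥ 3`. For any formal term `t` built from a single `k`-ary
operation symbol `w`, with `m` variable slots, and variables `x₁,…,xₘ`, `y₁,…,yₘ` with
`xᵢ ≠ yᵢ` for every `i`, the identity `t(x₁,…,xₘ) ≈ t(y₁,…,yₘ)` is not a consequence of
the `k`-wnu identities: there is an algebra with one `k`-ary operation satisfying the
`k`-wnu identities and an assignment of variables under which the two sides
evaluate differently. -/
theorem statement14 {k : ℕ} (hk : 3 ≤ k) {m : ℕ} (t : TermK k (Fin m))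
    (x y : Fin m → ℕ) (hxy : ∀ i, x i ≠ y i) :
    ∃ (B : Type) (f : (Fin k → B) → B) (σ : ℕ → B),
      IsKWNU f ∧ (t.rename x).eval f σ ≠ (t.rename y).eval f σ := by
  haveI : NeZero k := ⟨by omega⟩
  refine ⟨TermK k ℕ, wAK, TermK.var, isKWNU_wAK hk, ?_⟩
  rw [eval_rename, eval_rename]
  intro heq
  have hbase1 : ∀ i, ¬ SubK (TermK.var (x i) : TermK k ℕ) (TermK.var (y i)) := by
    intro i h
    have h' := subk_var h
    injection h' with h''
    exact hxy i h''
  have hbase2 : ∀ i, ¬ SubK (TermK.var (y i) : TermK k ℕ) (TermK.var (x i)) := by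
    intro i h
    have h' := subk_var h
    injection h' with h''
    exact hxy i h''.symm
  have hm := main_incomp hk t (fun i => TermK.var (x i)) (fun i => TermK.var (y i))
    (fun i => IsNFK.var _) (fun i => IsNFK.var _) hbase1 hbase2
  exact hm.1 (heq ▸ Relation.ReflTransGen.refl)
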